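/- Let E be a finite set with |E| ≤ n² for a positive integer n, and let P be a function from nonnegative weight functions w : E → ℝ≥0 to ℝ≥0 such that for every w, every e ∈ E, and every r ≥ 0, one has P(w) ≤ P(w′) ≤ P(w) + r, where w′ agrees with w except that w′(e) = w(e) + r. Let ε > 0, x > 0, and let t be a real with 0 ≤ t ≤ ε·x / (n²(1+ε)). Define w′ from w by setting w′(e) = 0 whenever w(e) < t and w′(e) = w(e) otherwise. If P(w) ≥ x, then P(w)/(1+ε) < P(w′) ≤ P(w). -/

import Mathlib

open NNReal

/-- **Shrinking small weights.** Let `P` be a function on nonnegative weight functions on a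
finite set `E` with `|E| ≤ n²` such that increasing the weight of a single element by `r`
does not decrease `P` and increases it by at most `r`. If `0 ≤ t ≤ ε·x/(n²(1+ε))` and `w'`
is obtained from `w` by zeroing out all weights below `t`, then `P w ≥ x` implies
`P w / (1+ε) < P w' ≤ P w`. -/
theorem shrinking_short_edges {E : Type*} [Fintype E] [DecidableEq E]
    (n : ℕ) (hn : 0 < n) (hcard : Fintype.card E ≤ n ^ 2)
    (P : (E → ℝ≥0) → ℝ≥0)
    (hP : ∀ (w : E → ℝ≥0) (e : E) (r : ℝ≥0),
      P w ≤ P (Function.update w e (w e + r)) ∧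
      P (Function.update w e (w e + r)) ≤ P w + r)
    (ε x t : ℝ≥0) (hε : 0 < ε) (hx : 0 < x)
    (ht : t ≤ ε * x / ((n : ℝ≥0) ^ 2 * (1 + ε)))
    (w : E → ℝ≥0) (hw : x ≤ P w) :
    P w / (1 + ε) < P (fun e => if w e < t then 0 else w e) ∧
    P (fun e => if w e < t then 0 else w e) ≤ P w := by
  set w' : E → ℝ≥0 := fun e => if w e < t then 0 else w e with hw'def
  have hle : ∀ e, w' e ≤ w e := by
    intro e; simp only [hw'def]; split <;> simp
  have key : ∀ s : Finset E,
      P w' ≤ P (fun e => if e ∈ s then w e else w' e) ∧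
      P (fun e => if e ∈ s then w e else w' e) ≤ P w' + ∑ e ∈ s, (w e - w' e) := by
    intro s
    induction s using Finset.induction_on with
    | empty => simp
    | insert a s ha ih =>
      have hfa : (fun e => if e ∈ insert a s then w e else w' e)
          = Function.update (fun e => if e ∈ s then w e else w' e) a
              ((fun e => if e ∈ s then w e else w' e) a + (w a - w' a)) := by
        funext e
        by_cases h : e = a
        · subst h
          simp [Function.update_self, ha, add_tsub_cancel_of_le (hle e)]
        · simp [Function.update_of_ne h, Finset.mem_insert, h]
      obtain ⟨h1, h2⟩ := hP (fun e => if e ∈ s then w e else w' e) a (w a - w' a)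
      rw [hfa]
      refine ⟨ih.1.trans h1, h2.trans ?_⟩
      rw [Finset.sum_insert ha]
      have := add_le_add_left ih.2 (w a - w' a)
      calc P (fun e => if e ∈ s then w e else w' e) + (w a - w' a)
          ≤ (P w' + ∑ e ∈ s, (w e - w' e)) + (w a - w' a) := this
        _ = P w' + ((w a - w' a) + ∑ e ∈ s, (w e - w' e)) := by ring
  have hkey := key Finset.univ
  have huniv : (fun e => if e ∈ (Finset.univ : Finset E) then w e else w' e) = w := by
    funext e; simp
  rw [huniv] at hkey
  obtain ⟨hlow, hup⟩ := hkey
  refine ⟨?_, hlow⟩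
  have h1ε : (0:ℝ) < 1 + (ε:ℝ) := by positivity
  rw [div_lt_iff₀ (by positivity : (0 : ℝ≥0) < 1 + ε)]
  rw [← NNReal.coe_lt_coe]
  push_cast
  by_cases hsame : w' = w
  · rw [hsame]
    have hPw : (0:ℝ) < (P w : ℝ) := lt_of_lt_of_le (by exact_mod_cast hx) (by exact_mod_cast hw)
    nlinarith [NNReal.coe_pos.mpr hε]
  · have hex : ∃ e, w' e ≠ w e := by
      by_contra h
      push_neg at h
      exact hsame (funext h)
    obtain ⟨e₀, he₀⟩ := hex
    have hdiff : ∀ e, ((w e - w' e : ℝ≥0) : ℝ) ≤ (t : ℝ) := by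
      intro e
      rw [NNReal.coe_le_coe]
      by_cases h : w e < t
      · have : w' e = 0 := by simp [hw'def, h]
        rw [this, tsub_zero]; exact h.le
      · have : w' e = w e := by simp [hw'def, h]
        simp [this]
    have hdiff₀ : ((w e₀ - w' e₀ : ℝ≥0) : ℝ) < (t : ℝ) := by
      rw [NNReal.coe_lt_coe]
      by_cases h : w e₀ < t
      · have : w' e₀ = 0 := by simp [hw'def, h]
        rw [this, tsub_zero]; exact h
      · exact absurd (by simp [hw'def, h]) he₀
    have hS : ∑ e, ((w e - w' e : ℝ≥0) : ℝ) < (Fintype.card E : ℝ) * (t : ℝ) := by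
      have := Finset.sum_lt_sum (s := (Finset.univ : Finset E))
        (f := fun e => ((w e - w' e : ℝ≥0) : ℝ)) (g := fun _ => (t : ℝ))
        (fun i _ => hdiff i) ⟨e₀, Finset.mem_univ e₀, hdiff₀⟩
      simpa [Finset.card_univ, mul_comm] using this
    have hcardR : (Fintype.card E : ℝ) ≤ (n : ℝ)^2 := by exact_mod_cast hcard
    have htR : (t : ℝ) ≤ (ε : ℝ) * (x : ℝ) / ((n : ℝ)^2 * (1 + ε)) := by
      have h := ht
      rw [← NNReal.coe_le_coe] at h
      push_cast at h
      convert h using 2 <;> push_cast <;> ring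
    have hnpos : (0:ℝ) < (n:ℝ)^2 := by positivity
    have htpos : (0:ℝ) ≤ (t:ℝ) := t.coe_nonneg
    have hnt : (Fintype.card E : ℝ) * (t : ℝ) ≤ (ε : ℝ) * (x : ℝ) / (1 + ε) := by
      have h1 : (Fintype.card E : ℝ) * (t:ℝ) ≤ (n:ℝ)^2 * (t:ℝ) :=
        mul_le_mul_of_nonneg_right hcardR htpos
      have h2 : (n:ℝ)^2 * (t:ℝ) ≤ (n:ℝ)^2 * ((ε:ℝ) * x / ((n:ℝ)^2 * (1+ε))) :=
        mul_le_mul_of_nonneg_left htR hnpos.le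
      have h3 : (n:ℝ)^2 * ((ε:ℝ) * x / ((n:ℝ)^2 * (1+ε))) = (ε:ℝ) * x / (1+ε) := by
        field_simp
      linarith
    have hupR : (P w : ℝ) ≤ (P w' : ℝ) + ∑ e, ((w e - w' e : ℝ≥0) : ℝ) := by
      rw [← NNReal.coe_sum] at *
      exact_mod_cast hup
    have hxP : (x:ℝ) ≤ (P w : ℝ) := by exact_mod_cast hw
    have hεR : (0:ℝ) < (ε:ℝ) := by exact_mod_cast hε
    have hkey2 : (P w : ℝ) < (P w' : ℝ) + (ε:ℝ) * (P w : ℝ) / (1+ε) := by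
      have hmono : (ε:ℝ) * x / (1+ε) ≤ (ε:ℝ) * (P w:ℝ) / (1+ε) := by
        gcongr
      linarith
    have hexp : ((P w':ℝ) + (ε:ℝ)*(P w:ℝ)/(1+ε))*(1+(ε:ℝ)) = (P w':ℝ)*(1+ε) + (ε:ℝ)*(P w:ℝ) := by
      field_simp
    nlinarith [mul_lt_mul_of_pos_right hkey2 h1ε, hexp]
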